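/- Let L be a finite-dimensional solvable Lie algebra with nilpotent length n(L), and let A be an ideal of L with N_{r-1}(L) ⊆ A ⊆ N_r(L). Then n(L/A) equals n(L) − r or n(L) − r + 1. -/

import Mathlib

/-- The canonical quotient map `L → L ⧸ I` as a morphism of Lie algebras. -/
def lieQuotMk {F L : Type*} [Field F] [LieRing L] [LieAlgebra F L] (I : LieIdeal F L) :
    L →ₗ⁅F⁆ L ⧸ I where
  toLinearMap := (LieSubmodule.Quotient.mk' I).toLinearMap
  map_lie' := rfl

variable (F : Type*) [Field F]

/-- The nilradical: the largest nilpotent ideal of a (finite-dimensional) Lie algebra. -/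
noncomputable def nilrad (L : Type*) [LieRing L] [LieAlgebra F L] : LieIdeal F L :=
  sSup {I : LieIdeal F L | LieModule.IsNilpotent I I}

/-- The upper nilpotent series: `N 0 = 0`, `N (i+1) / N i = nilradical of L ⧸ N i`. -/
noncomputable def upperNil (L : Type*) [LieRing L] [LieAlgebra F L] : ℕ → LieIdeal F L
  | 0 => ⊥
  | n + 1 => LieIdeal.comap (lieQuotMk (upperNil L n)) (nilrad F (L ⧸ upperNil L n))

/-- The nilpotent length: the least `n` with `N n = L`. -/
noncomputable def nilLen (L : Type*) [LieRing L] [LieAlgebra F L] : ℕ :=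
  sInf {n : ℕ | upperNil F L n = ⊤}

/-- The nilpotent residual `γ∞(L)`: the smallest ideal with nilpotent quotient. -/
noncomputable def nilResidual (L : Type*) [LieRing L] [LieAlgebra F L] : LieIdeal F L :=
  sInf {I : LieIdeal F L | LieModule.IsNilpotent (L ⧸ I) (L ⧸ I)}

/-- The lower nilpotent series: `Γ 0 = L`, `Γ (i+1) = γ∞(Γ i)`, viewed as subalgebras of `L`. -/
noncomputable def lowerNil (L : Type*) [LieRing L] [LieAlgebra F L] : ℕ → LieSubalgebra F L
  | 0 => ⊤
  | n + 1 =>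
      LieSubalgebra.map (lowerNil L n).incl
        (LieIdeal.toLieSubalgebra F (lowerNil L n) (nilResidual F (lowerNil L n)))

/-- `M` is a maximal (proper) subalgebra of `L`. -/
def IsMaxSub {L : Type*} [LieRing L] [LieAlgebra F L] (M : LieSubalgebra F L) : Prop :=
  M ≠ ⊤ ∧ ∀ K : LieSubalgebra F L, M < K → K = ⊤

/-- The Frattini subalgebra: the intersection of all maximal subalgebras. -/
noncomputable def lieFrattini (L : Type*) [LieRing L] [LieAlgebra F L] : LieSubalgebra F L :=
  sInf {M : LieSubalgebra F L | IsMaxSub F M}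

/-- The core of a subalgebra `U`: the largest ideal of `L` contained in `U`. -/
noncomputable def lieCore {L : Type*} [LieRing L] [LieAlgebra F L] (U : LieSubalgebra F L) :
    LieIdeal F L :=
  sSup {I : LieIdeal F L | (I : Set L) ⊆ (U : Set L)}

/-- `A` is a minimal ideal of `L`. -/
def IsMinIdeal {L : Type*} [LieRing L] [LieAlgebra F L] (A : LieIdeal F L) : Prop :=
  A ≠ ⊥ ∧ ∀ B : LieIdeal F L, B < A → B = ⊥

/-- The Frattini series: `φ i (L) / N (i-1) (L) = φ(L ⧸ N (i-1) (L))` for `i ≥ 1`. -/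
noncomputable def fratSeries (L : Type*) [LieRing L] [LieAlgebra F L] (i : ℕ) :
    LieSubalgebra F L :=
  LieSubalgebra.comap (lieQuotMk (upperNil F L (i - 1)))
    (lieFrattini F (L ⧸ upperNil F L (i - 1)))

/-- `L` is extreme: `N i (L) / φ i (L)` is a chief factor of `L` for each `1 ≤ i ≤ n(L)`. -/
def IsExtremeLie (L : Type*) [LieRing L] [LieAlgebra F L] : Prop :=
  ∀ i, 1 ≤ i → i ≤ nilLen F L →
    (fratSeries F L i : Set L) ⊆ (upperNil F L i : Set L) ∧
    (fratSeries F L i : Set L) ≠ (upperNil F L i : Set L) ∧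
    ∀ C : LieIdeal F L, (fratSeries F L i : Set L) ⊆ (C : Set L) → C ≤ upperNil F L i →
      (C : Set L) = (fratSeries F L i : Set L) ∨ C = upperNil F L i

/-- `L` is supersolvable: it has a chain of ideals with one-dimensional quotients. -/
def IsSupersolvable (L : Type*) [LieRing L] [LieAlgebra F L] : Prop :=
  ∃ (n : ℕ) (C : ℕ → LieIdeal F L), C 0 = ⊥ ∧ C n = ⊤ ∧
    ∀ i < n, C i ≤ C (i + 1) ∧
      Module.finrank F (C (i + 1)) = Module.finrank F (C i) + 1

/-- A minimal ideal `A` is complemented if some maximal subalgebra `M` satisfies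
`L = A + M` and `A ∩ M = 0`. -/
def IsComplementedIdeal {L : Type*} [LieRing L] [LieAlgebra F L] (A : LieIdeal F L) : Prop :=
  ∃ M : LieSubalgebra F L, IsMaxSub F M ∧
    A.toSubmodule ⊔ M.toSubmodule = ⊤ ∧ A.toSubmodule ⊓ M.toSubmodule = ⊥
section Aux

variable {L₁ M₁ M₂ : Type*} [LieRing L₁] [LieAlgebra F L₁]
  [LieRing M₁] [LieAlgebra F M₁] [LieRing M₂] [LieAlgebra F M₂]

theorem aux_hcongr (g : L₁ →ₗ⁅F⁆ M₁) (h : L₁ →ₗ⁅F⁆ M₂) (hker : ∀ x, g x = 0 → h x = 0)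
    {a b : L₁} (hab : g a = g b) : h a = h b := by
  have : h (a - b) = 0 := hker _ (by rw [map_sub, hab, sub_self])
  rwa [map_sub, sub_eq_zero] at this

/-- Lift a morphism along a surjection with smaller kernel. -/
noncomputable def liftOfSurj (g : L₁ →ₗ⁅F⁆ M₁) (h : L₁ →ₗ⁅F⁆ M₂)
    (hg : Function.Surjective g) (hker : ∀ x, g x = 0 → h x = 0) : M₁ →ₗ⁅F⁆ M₂ where
  toFun y := h (Function.surjInv hg y)
  map_add' y z := by
    rw [← map_add]
    exact aux_hcongr F g h hker (by simp [Function.surjInv_eq hg])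
  map_smul' t y := by
    simp only [RingHom.id_apply]
    rw [← map_smul]
    exact aux_hcongr F g h hker (by simp [Function.surjInv_eq hg])
  map_lie' {y z} := by
    rw [← LieHom.map_lie]
    exact aux_hcongr F g h hker (by simp [Function.surjInv_eq hg])

theorem liftOfSurj_apply (g : L₁ →ₗ⁅F⁆ M₁) (h : L₁ →ₗ⁅F⁆ M₂)
    (hg : Function.Surjective g) (hker : ∀ x, g x = 0 → h x = 0) (x : L₁) :
    liftOfSurj F g h hg hker (g x) = h x :=
  aux_hcongr F g h hker (Function.surjInv_eq hg (g x))

theorem isNilpotent_map {f : M₁ →ₗ⁅F⁆ M₂} (hf : Function.Surjective f) (I : LieIdeal F M₁)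
    (hI : LieModule.IsNilpotent I I) : LieModule.IsNilpotent (LieIdeal.map f I) (LieIdeal.map f I) := by
  let e : I →ₗ⁅F⁆ LieIdeal.map f I :=
    { toFun := fun x => ⟨f x, LieIdeal.mem_map x.2⟩
      map_add' := fun x y => by ext; simp
      map_smul' := fun t x => by ext; simp
      map_lie' := fun {x y} => by ext; simp [LieIdeal.coe_bracket_of_module] }
  have he : Function.Surjective e := by
    rintro ⟨y, hy⟩
    obtain ⟨x, hx⟩ := LieIdeal.mem_map_of_surjective hf hy
    exact ⟨x, Subtype.ext hx⟩
  haveI := hI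
  exact he.lieAlgebra_isNilpotent

theorem mem_nilrad_map {f : M₁ →ₗ⁅F⁆ M₂} (hf : Function.Surjective f) {x : M₁}
    (hx : x ∈ nilrad F M₁) : f x ∈ nilrad F M₂ := by
  have hle : LieIdeal.map f (nilrad F M₁) ≤ nilrad F M₂ := by
    rw [nilrad, LieIdeal.map_le_iff_le_comap]
    apply sSup_le
    intro I hI
    rw [← LieIdeal.map_le_iff_le_comap]
    exact le_sSup (isNilpotent_map F hf I hI)
  exact hle (LieIdeal.mem_map hx)

theorem upperNil_succ_mem {M : Type*} [LieRing M] [LieAlgebra F M] (j : ℕ) (x : M) :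
    x ∈ upperNil F M (j + 1) ↔
      lieQuotMk (upperNil F M j) x ∈ nilrad F (M ⧸ upperNil F M j) := by
  rw [upperNil]
  exact LieIdeal.mem_comap

theorem lieQuotMk_surj {M : Type*} [LieRing M] [LieAlgebra F M] (I : LieIdeal F M) :
    Function.Surjective (lieQuotMk (F := F) I) :=
  LieSubmodule.Quotient.surjective_mk' I

theorem lieQuotMk_eq_zero {M : Type*} [LieRing M] [LieAlgebra F M] (I : LieIdeal F M) (x : M) :
    lieQuotMk (F := F) I x = 0 ↔ x ∈ I :=
  LieSubmodule.Quotient.mk_eq_zero I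

/-- Images of the upper nilpotent series under a surjection land in the series. -/
theorem upperNil_map_mem (f : M₁ →ₗ⁅F⁆ M₂) (hf : Function.Surjective f) :
    ∀ j, ∀ x ∈ upperNil F M₁ j, f x ∈ upperNil F M₂ j := by
  intro j
  induction j with
  | zero =>
    intro x hx
    rw [upperNil, LieSubmodule.mem_bot] at hx ⊢
    rw [hx, map_zero]
  | succ j ih =>
    intro x hx
    rw [upperNil_succ_mem] at hx ⊢
    set g : M₁ →ₗ⁅F⁆ M₁ ⧸ upperNil F M₁ j := lieQuotMk (upperNil F M₁ j)
    set h : M₁ →ₗ⁅F⁆ M₂ ⧸ upperNil F M₂ j := (lieQuotMk (upperNil F M₂ j)).comp f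
    have hker : ∀ y, g y = 0 → h y = 0 := by
      intro y hy
      rw [lieQuotMk_eq_zero] at hy
      exact (lieQuotMk_eq_zero F _ _).2 (ih y hy)
    have hφ : Function.Surjective (liftOfSurj F g h (lieQuotMk_surj F _) hker) := by
      intro z
      obtain ⟨y, rfl⟩ := lieQuotMk_surj F (upperNil F M₂ j) z
      obtain ⟨w, rfl⟩ := hf y
      exact ⟨g w, liftOfSurj_apply F g h (lieQuotMk_surj F _) hker w⟩
    have := mem_nilrad_map F hφ hx
    rwa [liftOfSurj_apply F g h (lieQuotMk_surj F _) hker x] at this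

/-- Two surjections with the same kernel pull back nilradicals identically. -/
theorem comap_nilrad_eq (g : L₁ →ₗ⁅F⁆ M₁) (h : L₁ →ₗ⁅F⁆ M₂)
    (hg : Function.Surjective g) (hh : Function.Surjective h)
    (hker : ∀ x, g x = 0 ↔ h x = 0) (x : L₁) :
    g x ∈ nilrad F M₁ ↔ h x ∈ nilrad F M₂ := by
  have hφ : Function.Surjective (liftOfSurj F g h hg fun y hy => (hker y).1 hy) := by
    intro z
    obtain ⟨y, rfl⟩ := hh z
    exact ⟨g y, liftOfSurj_apply F g h hg _ y⟩
  have hψ : Function.Surjective (liftOfSurj F h g hh fun y hy => (hker y).2 hy) := by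
    intro z
    obtain ⟨y, rfl⟩ := hg z
    exact ⟨h y, liftOfSurj_apply F h g hh _ y⟩
  constructor
  · intro hx
    have := mem_nilrad_map F hφ hx
    rwa [liftOfSurj_apply F g h hg _ x] at this
  · intro hx
    have := mem_nilrad_map F hψ hx
    rwa [liftOfSurj_apply F h g hh _ x] at this

/-- The upper nilpotent series of `L ⧸ N_k` is the shift of the series of `L`. -/
theorem upperNil_quot {M : Type*} [LieRing M] [LieAlgebra F M] (k : ℕ) :
    ∀ j (x : M), lieQuotMk (upperNil F M k) x ∈ upperNil F (M ⧸ upperNil F M k) j ↔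
      x ∈ upperNil F M (k + j) := by
  intro j
  induction j with
  | zero =>
    intro x
    rw [upperNil, LieSubmodule.mem_bot, lieQuotMk_eq_zero, Nat.add_zero]
  | succ j ih =>
    intro x
    rw [upperNil_succ_mem]
    set g : M →ₗ⁅F⁆ (M ⧸ upperNil F M k) ⧸ upperNil F (M ⧸ upperNil F M k) j :=
      (lieQuotMk (upperNil F (M ⧸ upperNil F M k) j)).comp (lieQuotMk (upperNil F M k))
    set h : M →ₗ⁅F⁆ M ⧸ upperNil F M (k + j) := lieQuotMk (upperNil F M (k + j))
    have hg : Function.Surjective g :=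
      (lieQuotMk_surj F _).comp (lieQuotMk_surj F _)
    have hker : ∀ y, g y = 0 ↔ h y = 0 := by
      intro y
      show lieQuotMk _ (lieQuotMk _ y) = 0 ↔ _
      rw [lieQuotMk_eq_zero, lieQuotMk_eq_zero, ih]
    have key := comap_nilrad_eq F g h hg (lieQuotMk_surj F _) hker x
    show g x ∈ nilrad F _ ↔ _
    rw [key, show k + (j + 1) = (k + j) + 1 from rfl, upperNil_succ_mem]

theorem upperNil_mono_step {M : Type*} [LieRing M] [LieAlgebra F M] (j : ℕ) :
    upperNil F M j ≤ upperNil F M (j + 1) := by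
  intro x hx
  rw [upperNil_succ_mem, (lieQuotMk_eq_zero F _ x).2 hx]
  exact zero_mem _

theorem upperNil_top_mono {M : Type*} [LieRing M] [LieAlgebra F M] {j j' : ℕ}
    (h : upperNil F M j = ⊤) (hjj' : j ≤ j') : upperNil F M j' = ⊤ := by
  induction j' with
  | zero => exact le_antisymm le_top (Nat.le_zero.1 hjj' ▸ h ▸ le_rfl)
  | succ j' ih =>
    rcases Nat.lt_or_ge j (j' + 1) with hlt | hge
    · have := ih (Nat.lt_succ_iff.1 hlt)
      exact le_antisymm le_top (this ▸ upperNil_mono_step F j')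
    · exact le_antisymm le_top ((Nat.le_antisymm hjj' hge) ▸ h ▸ le_rfl)

theorem upperNil_top_of_surj (f : M₁ →ₗ⁅F⁆ M₂) (hf : Function.Surjective f) (j : ℕ)
    (h : upperNil F M₁ j = ⊤) : upperNil F M₂ j = ⊤ := by
  rw [eq_top_iff]
  intro y _
  obtain ⟨x, rfl⟩ := hf y
  exact upperNil_map_mem F f hf j x (h ▸ LieSubmodule.mem_top x)

theorem upperNil_quot_top_iff {M : Type*} [LieRing M] [LieAlgebra F M] (k j : ℕ) :
    upperNil F (M ⧸ upperNil F M k) j = ⊤ ↔ upperNil F M (k + j) = ⊤ := by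
  constructor
  · intro h
    rw [eq_top_iff]
    intro x _
    exact (upperNil_quot F k j x).1 (h ▸ LieSubmodule.mem_top _)
  · intro h
    rw [eq_top_iff]
    intro y _
    obtain ⟨x, rfl⟩ := lieQuotMk_surj F (upperNil F M k) y
    exact (upperNil_quot F k j x).2 (h ▸ LieSubmodule.mem_top x)

end Aux

/-- If `A` is an ideal with `N (r-1) (L) ⊆ A ⊆ N r (L)`, then `n(L ⧸ A)` equals
`n(L) - r` or `n(L) - r + 1`. -/
theorem stmt3 {F L : Type*} [Field F] [LieRing L] [LieAlgebra F L]
    [FiniteDimensional F L] [LieAlgebra.IsSolvable L]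
    (r : ℕ) (hr : 1 ≤ r) (A : LieIdeal F L)
    (h1 : upperNil F L (r - 1) ≤ A) (h2 : A ≤ upperNil F L r) :
    nilLen F (L ⧸ A) = nilLen F L - r ∨ nilLen F (L ⧸ A) = nilLen F L - r + 1 := by
  -- surjection `L ⧸ N_{r-1} → L ⧸ A`
  have hker₁ : ∀ x, lieQuotMk (F := F) (upperNil F L (r - 1)) x = 0 →
      lieQuotMk (F := F) A x = 0 := by
    intro x hx
    rw [lieQuotMk_eq_zero] at hx ⊢
    exact h1 hx
  set φ₁ := liftOfSurj F (lieQuotMk (upperNil F L (r - 1))) (lieQuotMk A)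
    (lieQuotMk_surj F _) hker₁ with hφ₁def
  have hφ₁ : Function.Surjective φ₁ := by
    intro z
    obtain ⟨x, rfl⟩ := lieQuotMk_surj F A z
    exact ⟨lieQuotMk (upperNil F L (r - 1)) x, liftOfSurj_apply F _ _ _ _ x⟩
  -- surjection `L ⧸ A → L ⧸ N_r`
  have hker₂ : ∀ x, lieQuotMk (F := F) A x = 0 →
      lieQuotMk (F := F) (upperNil F L r) x = 0 := by
    intro x hx
    rw [lieQuotMk_eq_zero] at hx ⊢
    exact h2 hx
  set φ₂ := liftOfSurj F (lieQuotMk A) (lieQuotMk (upperNil F L r))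
    (lieQuotMk_surj F _) hker₂ with hφ₂def
  have hφ₂ : Function.Surjective φ₂ := by
    intro z
    obtain ⟨x, rfl⟩ := lieQuotMk_surj F (upperNil F L r) z
    exact ⟨lieQuotMk A x, liftOfSurj_apply F _ _ _ _ x⟩
  -- two key implications
  have key₁ : ∀ j, upperNil F (L ⧸ A) j = ⊤ → upperNil F L (r + j) = ⊤ := by
    intro j h
    exact (upperNil_quot_top_iff F r j).1 (upperNil_top_of_surj F φ₂ hφ₂ j h)
  have key₂ : ∀ j, upperNil F L ((r - 1) + j) = ⊤ → upperNil F (L ⧸ A) j = ⊤ := by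
    intro j h
    exact upperNil_top_of_surj F φ₁ hφ₁ j ((upperNil_quot_top_iff F (r - 1) j).2 h)
  by_cases hS : ∃ m, upperNil F L m = ⊤
  · obtain ⟨m₀, hm₀⟩ := hS
    have hSne : {m : ℕ | upperNil F L m = ⊤}.Nonempty := ⟨m₀, hm₀⟩
    have hn_mem : upperNil F L (nilLen F L) = ⊤ := Nat.sInf_mem hSne
    set n := nilLen F L with hn
    have hiff : ∀ m, upperNil F L m = ⊤ ↔ n ≤ m := by
      intro m
      constructor
      · intro h; exact Nat.sInf_le h
      · intro h; exact upperNil_top_mono F hn_mem h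
    -- the set for `L ⧸ A` is nonempty
    have hj₀ : upperNil F (L ⧸ A) (n - (r - 1)) = ⊤ :=
      key₂ _ ((hiff _).2 (by omega))
    have hTne : {j : ℕ | upperNil F (L ⧸ A) j = ⊤}.Nonempty := ⟨_, hj₀⟩
    have hm_mem : upperNil F (L ⧸ A) (nilLen F (L ⧸ A)) = ⊤ := Nat.sInf_mem hTne
    have hub : nilLen F (L ⧸ A) ≤ n - (r - 1) := Nat.sInf_le hj₀
    have hlb : n ≤ r + nilLen F (L ⧸ A) := (hiff _).1 (key₁ _ hm_mem)
    omega
  · push_neg at hS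
    have hn : nilLen F L = 0 := by
      rw [nilLen]
      convert Nat.sInf_empty
      rw [Set.eq_empty_iff_forall_notMem]
      exact fun m hm => hS m hm
    have hq : nilLen F (L ⧸ A) = 0 := by
      rw [nilLen]
      convert Nat.sInf_empty
      rw [Set.eq_empty_iff_forall_notMem]
      intro j hj
      exact hS (r + j) (key₁ j hj)
    left
    omega
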